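/- In any minimal conformation of length N > 6, every occurrence of a type-2 window in the interior of the type sequence appears in the pattern α = →1→2←2←1; precisely, if window Γ_i has directed type →2 or ←2 and 4 ≤ i ≤ N−3, then the four consecutive windows containing this occurrence of the pair of 2's form the subword →1→2←2←1 (truncated only at the two ends of the type sequence), and the portion of the type sequence containing no type-2 windows consists of repetitions of β = →1←1. -/
import Mathlib


/-- Points of the cubic lattice `ℤ³`. -/
abbrev P3 : Type := Fin 3 → ℤ

def e1 : P3 := ![1, 0, 0]
def e2 : P3 := ![0, 1, 0]
def e3 : P3 := ![0, 0, 1]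

/-- Squared Euclidean norm of an integer vector; it equals `1` iff the
Euclidean norm equals `1`. -/
def sqNorm (v : P3) : ℤ := ∑ k, (v k) ^ 2

/-- A conformation of length `N`: an injective map on `{1, …, N}` whose
consecutive steps have Euclidean length one. -/
def IsConformation (N : ℕ) (Γ : ℕ → P3) : Prop :=
  Set.InjOn Γ (Set.Icc 1 N) ∧ ∀ i, 1 ≤ i → i < N → sqNorm (Γ (i + 1) - Γ i) = 1

/-- A lattice rotation: an orthogonal integer matrix of determinant one
(equivalently, a linear isometry of `ℝ³` mapping `ℤ³` onto `ℤ³` with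
determinant one). -/
def IsLatticeRotation (R : Matrix (Fin 3) (Fin 3) ℤ) : Prop :=
  R.transpose * R = 1 ∧ R.det = 1

/-- Equivalence of length-5 conformations: `Δ' k = R (Δ k) + t` for a lattice
rotation `R` and translation `t ∈ ℤ³`. -/
def Equiv5 (Δ Δ' : Fin 5 → P3) : Prop :=
  ∃ (R : Matrix (Fin 3) (Fin 3) ℤ) (t : P3),
    IsLatticeRotation R ∧ ∀ k, Δ' k = R.mulVec (Δ k) + t

/-- Reversal of a length-5 conformation (`k ↦ Δ (6 - k)` in 1-based indexing). -/
def rev5 (Δ : Fin 5 → P3) : Fin 5 → P3 := fun k => Δ k.rev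

/-- Conformation 1: vertices (0,0,0), (1,0,0), (1,1,0), (0,1,0), (0,1,1). -/
def conf1 : Fin 5 → P3 := ![![0, 0, 0], ![1, 0, 0], ![1, 1, 0], ![0, 1, 0], ![0, 1, 1]]

/-- Conformation 2: vertices (0,0,0), (0,1,0), (−1,1,0), (−1,1,1), (−1,0,1). -/
def conf2 : Fin 5 → P3 := ![![0, 0, 0], ![0, 1, 0], ![-1, 1, 0], ![-1, 1, 1], ![-1, 0, 1]]

/-- The `i`-th window of `Γ`: the 5-tuple `(Γ(i-2), …, Γ(i+2))`. -/
def window (Γ : ℕ → P3) (i : ℕ) : Fin 5 → P3 := fun k => Γ (i - 2 + (k : ℕ))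

/-- `Φ(Δ) = 1`: the 5-tuple `Δ` or its reversal is equivalent to
conformation 1 or to conformation 2. -/
def WindowGood (Δ : Fin 5 → P3) : Prop :=
  Equiv5 Δ conf1 ∨ Equiv5 (rev5 Δ) conf1 ∨ Equiv5 Δ conf2 ∨ Equiv5 (rev5 Δ) conf2

open Classical in
/-- The function `Φ` on length-5 conformations. -/
noncomputable def Phi (Δ : Fin 5 → P3) : ℤ := if WindowGood Δ then 1 else 0

/-- The energy `E₅(Γ) = −Σ_{i=3}^{N−2} Φ(Γ_i)`. -/
noncomputable def E5 (N : ℕ) (Γ : ℕ → P3) : ℤ :=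
  -∑ i ∈ Finset.Icc 3 (N - 2), Phi (window Γ i)

/-- A minimal conformation: a conformation all of whose windows satisfy `Φ = 1`. -/
def IsMinimal (N : ℕ) (Γ : ℕ → P3) : Prop :=
  IsConformation N Γ ∧ ∀ i, 3 ≤ i → i ≤ N - 2 → WindowGood (window Γ i)

/-- The walk starting at the origin (in 1-based indexing) whose steps
cyclically repeat the given list. -/
def cyclicWalk (steps : List P3) : ℕ → P3
  | 0 => 0
  | 1 => 0
  | n + 2 => cyclicWalk steps (n + 1) + steps.getD (n % steps.length) 0

/-- The 16-term step sequence of the lattice α-helix. -/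
def alphaStepList : List P3 :=
  [e1, e2, -e1, e3, -e2, e1, e2, e3, -e1, -e2, e1, e3, e2, -e1, -e2, e3]

/-- The 4-term step sequence of the lattice β-strand. -/
def betaStepList : List P3 := [e1, e2, -e1, e3]

/-- The lattice α-helix (`H(1) = 0`, steps cyclically repeating `alphaStepList`). -/
def alphaHelix : ℕ → P3 := cyclicWalk alphaStepList

/-- The lattice β-strand (`B(1) = 0`, steps cyclically repeating `betaStepList`). -/
def betaStrand : ℕ → P3 := cyclicWalk betaStepList

/-- The four directed types of windows. -/
inductive DType : Type
  | r1  -- →1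
  | l1  -- ←1
  | r2  -- →2
  | l2  -- ←2
deriving DecidableEq

/-- A window `Δ` has directed type `→1` (resp. `→2`) if it is equivalent to
conformation 1 (resp. 2), and `←1` (resp. `←2`) if its reversal is. -/
def HasType (Δ : Fin 5 → P3) : DType → Prop
  | DType.r1 => Equiv5 Δ conf1
  | DType.l1 => Equiv5 (rev5 Δ) conf1
  | DType.r2 => Equiv5 Δ conf2
  | DType.l2 => Equiv5 (rev5 Δ) conf2

/-- The six allowed ordered pairs of directed types of consecutive windows:
(→1,←1), (←1,→1), (→1,→2), (→2,←2), (←2,←1), (←2,→2). -/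
def allowedPairs : List (DType × DType) :=
  [(DType.r1, DType.l1), (DType.l1, DType.r1), (DType.r1, DType.r2),
   (DType.r2, DType.l2), (DType.l2, DType.l1), (DType.l2, DType.r2)]

/-- `w` is the type sequence of `Γ` (a conformation of length `N`):
`w` has length `N − 4` and its `j`-th letter is the directed type of the
window `Γ_{3+j}`, `j = 0, …, N−5`. -/
def HasTypeSeq (N : ℕ) (Γ : ℕ → P3) (w : List DType) : Prop :=
  w.length = N - 4 ∧ ∀ j (h : j < w.length), HasType (window Γ (3 + j)) (w.get ⟨j, h⟩)

/-- The word `α = →1→2←2←1`. -/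
def wordAlpha : List DType := [DType.r1, DType.r2, DType.l2, DType.l1]

/-- The word `β = →1←1`. -/
def wordBeta : List DType := [DType.r1, DType.l1]

/-- `v` is a finite concatenation of copies of the words `α` and `β`. -/
def IsABConcat (v : List DType) : Prop :=
  ∃ L : List (List DType), (∀ u ∈ L, u = wordAlpha ∨ u = wordBeta) ∧ v = L.flatten

/-- A word is admissible if it is a contiguous subword (factor) of some finite
concatenation of copies of `α` and `β`. -/
def Admissible (w : List DType) : Prop := ∃ v, IsABConcat v ∧ w <:+: v

/-- The two kinds of monomers. -/
inductive AB : Type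
  | A
  | B
deriving DecidableEq

/-- The number of occurrences of the letter `c` in the `i`-th 5-tuple
`S(i−2), …, S(i+2)` of the sequence `S`. -/
def countLetter (c : AB) (S : ℕ → AB) (i : ℕ) : ℕ :=
  ((Finset.Icc (i - 2) (i + 2)).filter fun k => S k = c).card

open Classical in
/-- `Φ₁(Δ) = 1` iff `Δ` or its reversal is equivalent to conformation 1. -/
noncomputable def Phi1 (Δ : Fin 5 → P3) : ℝ :=
  if Equiv5 Δ conf1 ∨ Equiv5 (rev5 Δ) conf1 then 1 else 0

open Classical in
/-- `Φ₂(Δ) = 1` iff `Δ` or its reversal is equivalent to conformation 2. -/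
noncomputable def Phi2 (Δ : Fin 5 → P3) : ℝ :=
  if Equiv5 Δ conf2 ∨ Equiv5 (rev5 Δ) conf2 then 1 else 0

/-- The heteropolymer energy
`E₅′(S,Γ) = −Σᵢ [#_B(Sᵢ)(Φ₁(Γᵢ) + ε Φ₂(Γᵢ)) + #_A(Sᵢ)(Φ₂(Γᵢ) + ε Φ₁(Γᵢ))]`. -/
noncomputable def E5' (ε : ℝ) (S : ℕ → AB) (N : ℕ) (Γ : ℕ → P3) : ℝ :=
  -∑ i ∈ Finset.Icc 3 (N - 2),
    ((countLetter AB.B S i : ℝ) * (Phi1 (window Γ i) + ε * Phi2 (window Γ i)) +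
      (countLetter AB.A S i : ℝ) * (Phi2 (window Γ i) + ε * Phi1 (window Γ i)))

/-! ### Auxiliary development -/

/-- explicit dot product on `P3` -/
def dot3 (v w : P3) : ℤ := v 0 * w 0 + v 1 * w 1 + v 2 * w 2

/-- explicit 3×3 determinant of three vectors -/
def det3 (a b c : P3) : ℤ :=
  a 0 * (b 1 * c 2 - b 2 * c 1) - a 1 * (b 0 * c 2 - b 2 * c 0) + a 2 * (b 0 * c 1 - b 1 * c 0)

/-- the `j`-th step of a length-5 conformation -/
def stp (Δ : Fin 5 → P3) (j : Fin 4) : P3 := Δ j.succ - Δ j.castSucc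

lemma rot_dot {R : Matrix (Fin 3) (Fin 3) ℤ} (hR : R.transpose * R = 1) (a b : P3) :
    dot3 (R.mulVec a) (R.mulVec b) = dot3 a b := by
  have h : ∀ p q : Fin 3, R 0 p * R 0 q + R 1 p * R 1 q + R 2 p * R 2 q
      = if p = q then 1 else 0 := by
    intro p q
    have := congrFun (congrFun hR p) q
    simpa [Matrix.mul_apply, Matrix.transpose_apply, Fin.sum_univ_three, Matrix.one_apply]
      using this
  have h00 : R 0 0 * R 0 0 + R 1 0 * R 1 0 + R 2 0 * R 2 0 = 1 := by simpa using h 0 0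
  have h01 : R 0 0 * R 0 1 + R 1 0 * R 1 1 + R 2 0 * R 2 1 = 0 := by simpa using h 0 1
  have h02 : R 0 0 * R 0 2 + R 1 0 * R 1 2 + R 2 0 * R 2 2 = 0 := by simpa using h 0 2
  have h10 : R 0 1 * R 0 0 + R 1 1 * R 1 0 + R 2 1 * R 2 0 = 0 := by simpa using h 1 0
  have h11 : R 0 1 * R 0 1 + R 1 1 * R 1 1 + R 2 1 * R 2 1 = 1 := by simpa using h 1 1
  have h12 : R 0 1 * R 0 2 + R 1 1 * R 1 2 + R 2 1 * R 2 2 = 0 := by simpa using h 1 2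
  have h20 : R 0 2 * R 0 0 + R 1 2 * R 1 0 + R 2 2 * R 2 0 = 0 := by simpa using h 2 0
  have h21 : R 0 2 * R 0 1 + R 1 2 * R 1 1 + R 2 2 * R 2 1 = 0 := by simpa using h 2 1
  have h22 : R 0 2 * R 0 2 + R 1 2 * R 1 2 + R 2 2 * R 2 2 = 1 := by simpa using h 2 2
  simp only [dot3, Matrix.mulVec, dotProduct, Fin.sum_univ_three]
  linear_combination a 0 * b 0 * h00 + a 0 * b 1 * h01 + a 0 * b 2 * h02 +
    a 1 * b 0 * h10 + a 1 * b 1 * h11 + a 1 * b 2 * h12 +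
    a 2 * b 0 * h20 + a 2 * b 1 * h21 + a 2 * b 2 * h22

lemma rot_det {R : Matrix (Fin 3) (Fin 3) ℤ} (hR : R.det = 1) (a b c : P3) :
    det3 (R.mulVec a) (R.mulVec b) (R.mulVec c) = det3 a b c := by
  have key : det3 (R.mulVec a) (R.mulVec b) (R.mulVec c) = R.det * det3 a b c := by
    simp only [det3, Matrix.det_fin_three, Matrix.mulVec, dotProduct,
      Fin.sum_univ_three]
    ring
  rw [key, hR, one_mul]

lemma equiv5_stp {Δ Δ' : Fin 5 → P3} {R : Matrix (Fin 3) (Fin 3) ℤ} {t : P3}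
    (he : ∀ k, Δ' k = R.mulVec (Δ k) + t) (j : Fin 4) :
    stp Δ' j = R.mulVec (stp Δ j) := by
  funext i
  simp only [stp, he, Pi.sub_apply, Pi.add_apply, Matrix.mulVec, dotProduct,
    Fin.sum_univ_three]
  ring

lemma stp_rev5 (Δ : Fin 5 → P3) (j : Fin 4) : stp (rev5 Δ) j = -(stp Δ j.rev) := by
  have hb := j.isLt
  have e1 : j.succ.rev = (j.rev).castSucc := by
    ext
    simp only [Fin.val_rev, Fin.val_succ, Fin.coe_castSucc]
    omega
  have e2 : j.castSucc.rev = (j.rev).succ := by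
    ext
    simp only [Fin.val_rev, Fin.val_succ, Fin.coe_castSucc]
    omega
  show Δ j.succ.rev - Δ j.castSucc.rev = _
  rw [e1, e2]
  show Δ (j.rev).castSucc - Δ (j.rev).succ = -(Δ (j.rev).succ - Δ (j.rev).castSucc)
  abel

lemma dot3_neg_neg (a b : P3) : dot3 (-a) (-b) = dot3 a b := by
  simp [dot3]

lemma det3_neg_neg_neg (a b c : P3) : det3 (-a) (-b) (-c) = -det3 a b c := by
  simp only [det3, Pi.neg_apply]; ring

/-- reference Gram values for each directed type -/
def gram : DType → Fin 4 → Fin 4 → ℤ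
  | DType.r1, j, k => dot3 (stp conf1 j) (stp conf1 k)
  | DType.l1, j, k => dot3 (stp conf1 j.rev) (stp conf1 k.rev)
  | DType.r2, j, k => dot3 (stp conf2 j) (stp conf2 k)
  | DType.l2, j, k => dot3 (stp conf2 j.rev) (stp conf2 k.rev)

/-- reference determinant values for each directed type -/
def ddet : DType → Fin 4 → Fin 4 → Fin 4 → ℤ
  | DType.r1, a, b, c => det3 (stp conf1 a) (stp conf1 b) (stp conf1 c)
  | DType.l1, a, b, c => -det3 (stp conf1 a.rev) (stp conf1 b.rev) (stp conf1 c.rev)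
  | DType.r2, a, b, c => det3 (stp conf2 a) (stp conf2 b) (stp conf2 c)
  | DType.l2, a, b, c => -det3 (stp conf2 a.rev) (stp conf2 b.rev) (stp conf2 c.rev)

lemma type_dot {Δ : Fin 5 → P3} {ty : DType} (h : HasType Δ ty) (j k : Fin 4) :
    dot3 (stp Δ j) (stp Δ k) = gram ty j k := by
  cases ty with
  | r1 =>
    obtain ⟨R, t, hR, he⟩ := h
    have h1 := rot_dot hR.1 (stp Δ j) (stp Δ k)
    rw [← equiv5_stp he j, ← equiv5_stp he k] at h1
    exact h1.symm
  | l1 =>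
    obtain ⟨R, t, hR, he⟩ := h
    have h1 := rot_dot hR.1 (stp (rev5 Δ) j.rev) (stp (rev5 Δ) k.rev)
    rw [← equiv5_stp he j.rev, ← equiv5_stp he k.rev] at h1
    rw [stp_rev5, stp_rev5, Fin.rev_rev, Fin.rev_rev, dot3_neg_neg] at h1
    exact h1.symm
  | r2 =>
    obtain ⟨R, t, hR, he⟩ := h
    have h1 := rot_dot hR.1 (stp Δ j) (stp Δ k)
    rw [← equiv5_stp he j, ← equiv5_stp he k] at h1
    exact h1.symm
  | l2 =>
    obtain ⟨R, t, hR, he⟩ := h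
    have h1 := rot_dot hR.1 (stp (rev5 Δ) j.rev) (stp (rev5 Δ) k.rev)
    rw [← equiv5_stp he j.rev, ← equiv5_stp he k.rev] at h1
    rw [stp_rev5, stp_rev5, Fin.rev_rev, Fin.rev_rev, dot3_neg_neg] at h1
    exact h1.symm

lemma type_det {Δ : Fin 5 → P3} {ty : DType} (h : HasType Δ ty) (a b c : Fin 4) :
    det3 (stp Δ a) (stp Δ b) (stp Δ c) = ddet ty a b c := by
  cases ty with
  | r1 =>
    obtain ⟨R, t, hR, he⟩ := h
    have h1 := rot_det hR.2 (stp Δ a) (stp Δ b) (stp Δ c)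
    rw [← equiv5_stp he a, ← equiv5_stp he b, ← equiv5_stp he c] at h1
    exact h1.symm
  | l1 =>
    obtain ⟨R, t, hR, he⟩ := h
    have h1 := rot_det hR.2 (stp (rev5 Δ) a.rev) (stp (rev5 Δ) b.rev) (stp (rev5 Δ) c.rev)
    rw [← equiv5_stp he a.rev, ← equiv5_stp he b.rev, ← equiv5_stp he c.rev] at h1
    rw [stp_rev5, stp_rev5, stp_rev5, Fin.rev_rev, Fin.rev_rev, Fin.rev_rev,
      det3_neg_neg_neg] at h1
    show _ = -det3 (stp conf1 a.rev) (stp conf1 b.rev) (stp conf1 c.rev)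
    linarith [h1]
  | r2 =>
    obtain ⟨R, t, hR, he⟩ := h
    have h1 := rot_det hR.2 (stp Δ a) (stp Δ b) (stp Δ c)
    rw [← equiv5_stp he a, ← equiv5_stp he b, ← equiv5_stp he c] at h1
    exact h1.symm
  | l2 =>
    obtain ⟨R, t, hR, he⟩ := h
    have h1 := rot_det hR.2 (stp (rev5 Δ) a.rev) (stp (rev5 Δ) b.rev) (stp (rev5 Δ) c.rev)
    rw [← equiv5_stp he a.rev, ← equiv5_stp he b.rev, ← equiv5_stp he c.rev] at h1
    rw [stp_rev5, stp_rev5, stp_rev5, Fin.rev_rev, Fin.rev_rev, Fin.rev_rev,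
      det3_neg_neg_neg] at h1
    show _ = -det3 (stp conf2 a.rev) (stp conf2 b.rev) (stp conf2 c.rev)
    linarith [h1]

lemma window_stp (Γ : ℕ → P3) (b : ℕ) (j : Fin 4) :
    stp (window Γ (b + 2)) j = Γ (b + ↑j + 1) - Γ (b + ↑j) := by
  have e1 : b + 2 - 2 + (↑(j.succ) : ℕ) = b + ↑j + 1 := by
    simp only [Fin.val_succ]; omega
  have e2 : b + 2 - 2 + (↑(j.castSucc) : ℕ) = b + ↑j := by
    simp only [Fin.coe_castSucc]; omega
  show window Γ (b + 2) j.succ - window Γ (b + 2) j.castSucc = _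
  unfold window
  rw [e1, e2]

lemma type_dot_nat (Γ : ℕ → P3) (b : ℕ) {ty : DType} (h : HasType (window Γ (b + 2)) ty)
    (j k : ℕ) (hj : j < 4) (hk : k < 4) :
    dot3 (Γ (b + j + 1) - Γ (b + j)) (Γ (b + k + 1) - Γ (b + k)) = gram ty ⟨j, hj⟩ ⟨k, hk⟩ := by
  have h1 := type_dot h ⟨j, hj⟩ ⟨k, hk⟩
  rw [window_stp, window_stp] at h1
  exact h1

lemma type_det_nat (Γ : ℕ → P3) (b : ℕ) {ty : DType} (h : HasType (window Γ (b + 2)) ty)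
    (a c d : ℕ) (ha : a < 4) (hc : c < 4) (hd : d < 4) :
    det3 (Γ (b + a + 1) - Γ (b + a)) (Γ (b + c + 1) - Γ (b + c)) (Γ (b + d + 1) - Γ (b + d))
      = ddet ty ⟨a, ha⟩ ⟨c, hc⟩ ⟨d, hd⟩ := by
  have h1 := type_det h ⟨a, ha⟩ ⟨c, hc⟩ ⟨d, hd⟩
  rw [window_stp, window_stp, window_stp] at h1
  exact h1

lemma step_neg {u v : P3} (h1 : dot3 u u = 1) (h2 : dot3 v v = 1) (h3 : dot3 u v = -1) :
    v = -u := by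
  simp only [dot3] at h1 h2 h3
  have key : (u 0 + v 0) ^ 2 + (u 1 + v 1) ^ 2 + (u 2 + v 2) ^ 2 = 0 := by
    linear_combination h1 + h2 + 2 * h3
  have s0 := sq_nonneg (u 0 + v 0)
  have s1 := sq_nonneg (u 1 + v 1)
  have s2 := sq_nonneg (u 2 + v 2)
  have z0 : u 0 + v 0 = 0 := by
    have : (u 0 + v 0) ^ 2 = 0 := by linarith
    exact pow_eq_zero_iff (two_ne_zero) |>.mp this
  have z1 : u 1 + v 1 = 0 := by
    have : (u 1 + v 1) ^ 2 = 0 := by linarith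
    exact pow_eq_zero_iff (two_ne_zero) |>.mp this
  have z2 : u 2 + v 2 = 0 := by
    have : (u 2 + v 2) ^ 2 = 0 := by linarith
    exact pow_eq_zero_iff (two_ne_zero) |>.mp this
  funext i
  fin_cases i
  · show v 0 = (-u) 0
    simp only [Pi.neg_apply]; linarith
  · show v 1 = (-u) 1
    simp only [Pi.neg_apply]; linarith
  · show v 2 = (-u) 2
    simp only [Pi.neg_apply]; linarith

lemma no_pair (x y : DType)
    (h1 : gram x ⟨1, by omega⟩ ⟨2, by omega⟩ = gram y ⟨0, by omega⟩ ⟨1, by omega⟩)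
    (h2 : gram x ⟨1, by omega⟩ ⟨3, by omega⟩ = gram y ⟨0, by omega⟩ ⟨2, by omega⟩)
    (h3 : gram x ⟨2, by omega⟩ ⟨3, by omega⟩ = gram y ⟨1, by omega⟩ ⟨2, by omega⟩)
    (h4 : ddet x ⟨1, by omega⟩ ⟨2, by omega⟩ ⟨3, by omega⟩
        = ddet y ⟨0, by omega⟩ ⟨1, by omega⟩ ⟨2, by omega⟩) :
    (x, y) ∈ allowedPairs := by
  cases x <;> cases y <;> revert h1 h2 h3 h4 <;> decide

lemma pair_mem (Γ : ℕ → P3) (n : ℕ) {x y : DType}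
    (hx : HasType (window Γ (n + 3)) x) (hy : HasType (window Γ (n + 4)) y) :
    (x, y) ∈ allowedPairs := by
  have hx' : HasType (window Γ ((n + 1) + 2)) x := hx
  have hy' : HasType (window Γ ((n + 2) + 2)) y := hy
  have A1 := type_dot_nat Γ (n + 1) hx' 1 2 (by omega) (by omega)
  have A2 := type_dot_nat Γ (n + 1) hx' 1 3 (by omega) (by omega)
  have A3 := type_dot_nat Γ (n + 1) hx' 2 3 (by omega) (by omega)
  have A4 := type_det_nat Γ (n + 1) hx' 1 2 3 (by omega) (by omega) (by omega)
  have B1 := type_dot_nat Γ (n + 2) hy' 0 1 (by omega) (by omega)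
  have B2 := type_dot_nat Γ (n + 2) hy' 0 2 (by omega) (by omega)
  have B3 := type_dot_nat Γ (n + 2) hy' 1 2 (by omega) (by omega)
  have B4 := type_det_nat Γ (n + 2) hy' 0 1 2 (by omega) (by omega) (by omega)
  simp only [show n+1+1 = n+2 by omega, show n+2+1 = n+3 by omega, show n+3+1 = n+4 by omega,
    show n+4+1 = n+5 by omega, show n+1+2 = n+3 by omega, show n+1+3 = n+4 by omega,
    show n+2+0 = n+2 by omega, show n+2+2 = n+4 by omega] at A1 A2 A3 A4 B1 B2 B3 B4
  exact no_pair x y (A1.symm.trans B1) (A2.symm.trans B2) (A3.symm.trans B3) (A4.symm.trans B4)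

lemma no_three (N : ℕ) (Γ : ℕ → P3) (hc : IsConformation N Γ) (n : ℕ) (hN : n + 7 ≤ N)
    {x y z : DType}
    (hx2 : x = DType.r2 ∨ x = DType.l2) (hy2 : y = DType.r2 ∨ y = DType.l2)
    (hz2 : z = DType.r2 ∨ z = DType.l2)
    (hx : HasType (window Γ (n + 3)) x) (hy : HasType (window Γ (n + 4)) y)
    (hz : HasType (window Γ (n + 5)) z) : False := by
  have g1 : ∀ t : DType, t = DType.r2 ∨ t = DType.l2 →
      gram t ⟨0, by omega⟩ ⟨0, by omega⟩ = 1 ∧ gram t ⟨3, by omega⟩ ⟨3, by omega⟩ = 1 ∧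
        gram t ⟨0, by omega⟩ ⟨3, by omega⟩ = -1 := by
    rintro t (rfl | rfl) <;> refine ⟨?_, ?_, ?_⟩ <;> rfl
  have hx' : HasType (window Γ ((n + 1) + 2)) x := hx
  have hy' : HasType (window Γ ((n + 2) + 2)) y := hy
  have hz' : HasType (window Γ ((n + 3) + 2)) z := hz
  have X1 := type_dot_nat Γ (n + 1) hx' 0 0 (by omega) (by omega)
  have X2 := type_dot_nat Γ (n + 1) hx' 3 3 (by omega) (by omega)
  have X3 := type_dot_nat Γ (n + 1) hx' 0 3 (by omega) (by omega)
  have Y1 := type_dot_nat Γ (n + 2) hy' 0 0 (by omega) (by omega)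
  have Y2 := type_dot_nat Γ (n + 2) hy' 3 3 (by omega) (by omega)
  have Y3 := type_dot_nat Γ (n + 2) hy' 0 3 (by omega) (by omega)
  have Z1 := type_dot_nat Γ (n + 3) hz' 0 0 (by omega) (by omega)
  have Z2 := type_dot_nat Γ (n + 3) hz' 3 3 (by omega) (by omega)
  have Z3 := type_dot_nat Γ (n + 3) hz' 0 3 (by omega) (by omega)
  rw [(g1 x hx2).1] at X1
  rw [(g1 x hx2).2.1] at X2
  rw [(g1 x hx2).2.2] at X3
  rw [(g1 y hy2).1] at Y1
  rw [(g1 y hy2).2.1] at Y2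
  rw [(g1 y hy2).2.2] at Y3
  rw [(g1 z hz2).1] at Z1
  rw [(g1 z hz2).2.1] at Z2
  rw [(g1 z hz2).2.2] at Z3
  simp only [show n+1+0 = n+1 by omega, show n+2+0 = n+2 by omega, show n+3+0 = n+3 by omega,
    show n+1+1 = n+2 by omega, show n+2+1 = n+3 by omega, show n+3+1 = n+4 by omega,
    show n+4+1 = n+5 by omega, show n+5+1 = n+6 by omega, show n+6+1 = n+7 by omega,
    show n+1+3 = n+4 by omega, show n+2+3 = n+5 by omega, show n+3+3 = n+6 by omega]
    at X1 X2 X3 Y1 Y2 Y3 Z1 Z2 Z3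
  have E1 : Γ (n+5) - Γ (n+4) = -(Γ (n+2) - Γ (n+1)) := step_neg X1 X2 X3
  have E2 : Γ (n+6) - Γ (n+5) = -(Γ (n+3) - Γ (n+2)) := step_neg Y1 Y2 Y3
  have E3 : Γ (n+7) - Γ (n+6) = -(Γ (n+4) - Γ (n+3)) := step_neg Z1 Z2 Z3
  have hsum : Γ (n+7) - Γ (n+1) = (Γ (n+2) - Γ (n+1)) + (Γ (n+3) - Γ (n+2)) +
      (Γ (n+4) - Γ (n+3)) + (Γ (n+5) - Γ (n+4)) + (Γ (n+6) - Γ (n+5)) +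
      (Γ (n+7) - Γ (n+6)) := by abel
  rw [E1, E2, E3] at hsum
  have hzero : Γ (n+7) - Γ (n+1) = 0 := by rw [hsum]; abel
  have heq : Γ (n+7) = Γ (n+1) := sub_eq_zero.mp hzero
  have h17 : n + 7 = n + 1 :=
    hc.1 (Set.mem_Icc.mpr ⟨by omega, by omega⟩) (Set.mem_Icc.mpr ⟨by omega, by omega⟩) heq
  omega

/-- in a minimal conformation of length `N > 6`, every interior
occurrence of a type-2 window appears inside the pattern `α = →1→2←2←1`
(truncated only at the two ends of the type sequence), and consecutive type-1
windows alternate as in repetitions of `β = →1←1`. -/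
theorem type2_occurs_in_alpha_pattern (N : ℕ) (hN : 6 < N) (Γ : ℕ → P3)
    (hΓ : IsMinimal N Γ) :
    (∀ i, 4 ≤ i → i ≤ N - 3 → HasType (window Γ i) DType.r2 →
      HasType (window Γ (i - 1)) DType.r1 ∧ HasType (window Γ (i + 1)) DType.l2 ∧
        (i + 2 ≤ N - 2 → HasType (window Γ (i + 2)) DType.l1)) ∧
    (∀ i, 4 ≤ i → i ≤ N - 3 → HasType (window Γ i) DType.l2 →
      HasType (window Γ (i - 1)) DType.r2 ∧ HasType (window Γ (i + 1)) DType.l1 ∧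
        (3 ≤ i - 2 → HasType (window Γ (i - 2)) DType.r1)) ∧
    (∀ i, 3 ≤ i → i + 1 ≤ N - 2 →
      (HasType (window Γ i) DType.r1 ∨ HasType (window Γ i) DType.l1) →
      (HasType (window Γ (i + 1)) DType.r1 ∨ HasType (window Γ (i + 1)) DType.l1) →
      (HasType (window Γ i) DType.r1 ∧ HasType (window Γ (i + 1)) DType.l1) ∨
        (HasType (window Γ i) DType.l1 ∧ HasType (window Γ (i + 1)) DType.r1)) := by
  obtain ⟨hconf, hmin⟩ := hΓ
  have good : ∀ i, 3 ≤ i → i ≤ N - 2 → ∃ t, HasType (window Γ i) t := by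
    intro i h1 h2
    rcases hmin i h1 h2 with h | h | h | h
    exacts [⟨DType.r1, h⟩, ⟨DType.l1, h⟩, ⟨DType.r2, h⟩, ⟨DType.l2, h⟩]
  refine ⟨?_, ?_, ?_⟩
  · -- part 1: →2 windows
    intro i h4 hi3 hr2
    obtain ⟨n, rfl⟩ : ∃ n, i = n + 4 := ⟨i - 4, by omega⟩
    obtain ⟨t, ht⟩ := good (n + 5) (by omega) (by omega)
    have hpt : (DType.r2, t) ∈ allowedPairs := pair_mem Γ (n + 1) hr2 ht
    have ht2 : t = DType.l2 := by
      cases t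
      · exact absurd hpt (by decide)
      · exact absurd hpt (by decide)
      · exact absurd hpt (by decide)
      · rfl
    subst ht2
    obtain ⟨s, hs⟩ := good (n + 3) (by omega) (by omega)
    have hps : (s, DType.r2) ∈ allowedPairs := pair_mem Γ n hs hr2
    have hs1 : s = DType.r1 := by
      cases s
      · rfl
      · exact absurd hps (by decide)
      · exact absurd hps (by decide)
      · exact (no_three N Γ hconf n (by omega) (Or.inr rfl) (Or.inl rfl) (Or.inr rfl)
          hs hr2 ht).elim
    subst hs1
    refine ⟨?_, ht, ?_⟩
    · rw [show n + 4 - 1 = n + 3 by omega]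
      exact hs
    · intro h22
      obtain ⟨u, hu⟩ := good (n + 6) (by omega) (by omega)
      have hpu : (DType.l2, u) ∈ allowedPairs := pair_mem Γ (n + 2) ht hu
      cases u
      · exact absurd hpu (by decide)
      · exact hu
      · exact (no_three N Γ hconf (n + 1) (by omega) (Or.inl rfl) (Or.inr rfl) (Or.inl rfl)
          hr2 ht hu).elim
      · exact absurd hpu (by decide)
  · -- part 2: ←2 windows
    intro i h4 hi3 hl2
    obtain ⟨n, rfl⟩ : ∃ n, i = n + 4 := ⟨i - 4, by omega⟩
    obtain ⟨s, hs⟩ := good (n + 3) (by omega) (by omega)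
    have hps : (s, DType.l2) ∈ allowedPairs := pair_mem Γ n hs hl2
    have hs2 : s = DType.r2 := by
      cases s
      · exact absurd hps (by decide)
      · exact absurd hps (by decide)
      · rfl
      · exact absurd hps (by decide)
    subst hs2
    obtain ⟨t, ht⟩ := good (n + 5) (by omega) (by omega)
    have hpt : (DType.l2, t) ∈ allowedPairs := pair_mem Γ (n + 1) hl2 ht
    have ht1 : t = DType.l1 := by
      cases t
      · exact absurd hpt (by decide)
      · rfl
      · exact (no_three N Γ hconf n (by omega) (Or.inl rfl) (Or.inr rfl) (Or.inl rfl)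
          hs hl2 ht).elim
      · exact absurd hpt (by decide)
    subst ht1
    refine ⟨?_, ht, ?_⟩
    · rw [show n + 4 - 1 = n + 3 by omega]
      exact hs
    · intro h32
      obtain ⟨p, rfl⟩ : ∃ p, n = p + 1 := ⟨n - 1, by omega⟩
      obtain ⟨w, hw⟩ := good (p + 3) (by omega) (by omega)
      have hpw : (w, DType.r2) ∈ allowedPairs := pair_mem Γ p hw hs
      have hw1 : w = DType.r1 := by
        cases w
        · rfl
        · exact absurd hpw (by decide)
        · exact absurd hpw (by decide)
        · exact (no_three N Γ hconf p (by omega) (Or.inr rfl) (Or.inl rfl) (Or.inr rfl)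
            hw hs hl2).elim
      subst hw1
      rw [show p + 1 + 4 - 2 = p + 3 by omega]
      exact hw
  · -- part 3: consecutive type-1 windows alternate
    intro i h3 hle h1 h2
    obtain ⟨n, rfl⟩ : ∃ n, i = n + 3 := ⟨i - 3, by omega⟩
    rcases h1 with h | h <;> rcases h2 with h' | h'
    · exact absurd (pair_mem Γ n h h') (by decide)
    · exact Or.inl ⟨h, h'⟩
    · exact Or.inr ⟨h, h'⟩
    · exact absurd (pair_mem Γ n h h') (by decide)
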